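/- Let p, p̃ : [0,1] → ℝ be continuous and strictly positive, let α, β ∈ ℝ, and let λ, λ̃ ∈ ℝ with λ̃ ≠ 0. Let u, ũ : [0,1] → ℝ be twice continuously differentiable, satisfy BC(α,β), be strictly positive on the open interval (0,1), and solve −u''(x) = λ·p(x)·u(x) and −ũ''(x) = λ̃·p̃(x)·ũ(x) on [0,1]. If λ = λ̃ · min_{x ∈ [0,1]} ( p̃(x)/p(x) ), then λ ≠ 0 and p(x) = (λ̃/λ)·p̃(x) for all x ∈ [0,1]. -/

import Mathlib

open Real

/-- Separated boundary conditions BC(α,β) on [0,1]. -/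
def BC (α β : ℝ) (w : ℝ → ℝ) : Prop :=
  w 0 * Real.cos α + deriv w 0 * Real.sin α = 0 ∧
  w 1 * Real.cos β + deriv w 1 * Real.sin β = 0

/-- Determinant vanishing for two vectors orthogonal to a common unit vector. -/
lemma det_aux (a b c d s t : ℝ) (h : s ^ 2 + t ^ 2 = 1)
    (h1 : a * s + b * t = 0) (h2 : c * s + d * t = 0) : b * c - a * d = 0 := by
  linear_combination (c * t - d * s) * h1 + (b * s - a * t) * h2 - (b * c - a * d) * h

/-- A continuous function on [0,1], vanishing at both endpoints, whose derivative is
nonnegative on (0,1), vanishes identically on [0,1]. -/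
lemma zero_of_mono (W : ℝ → ℝ) (hc : Continuous W) (hd : Differentiable ℝ W)
    (hnn : ∀ x ∈ Set.Ioo (0:ℝ) 1, 0 ≤ deriv W x)
    (h0 : W 0 = 0) (h1 : W 1 = 0) : ∀ x ∈ Set.Icc (0:ℝ) 1, W x = 0 := by
  have hmono : MonotoneOn W (Set.Icc (0:ℝ) 1) := by
    apply monotoneOn_of_deriv_nonneg (convex_Icc 0 1) hc.continuousOn
      (hd.differentiableOn)
    intro x hx
    rw [interior_Icc] at hx
    exact hnn x hx
  intro x hx
  have hle : W x ≤ 0 := h1 ▸ hmono hx (by norm_num) hx.2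
  have hge : 0 ≤ W x := h0 ▸ hmono (by norm_num) hx hx.1
  linarith

/-- The 'min' half of Theorem 2.1: first-eigenvalue Ambarzumyan-type theorem. -/
theorem stmt_2 (p pt : ℝ → ℝ) (hp : Continuous p) (hpt : Continuous pt)
    (hppos : ∀ x ∈ Set.Icc (0:ℝ) 1, 0 < p x)
    (hptpos : ∀ x ∈ Set.Icc (0:ℝ) 1, 0 < pt x)
    (α β : ℝ) (l lt : ℝ) (hlt : lt ≠ 0) (u ut : ℝ → ℝ)
    (hu : ContDiff ℝ 2 u) (hut : ContDiff ℝ 2 ut)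
    (hbc : BC α β u) (htbc : BC α β ut)
    (hupos : ∀ x ∈ Set.Ioo (0:ℝ) 1, 0 < u x)
    (hutpos : ∀ x ∈ Set.Ioo (0:ℝ) 1, 0 < ut x)
    (hode : ∀ x ∈ Set.Icc (0:ℝ) 1, -(deriv (deriv u) x) = l * p x * u x)
    (htode : ∀ x ∈ Set.Icc (0:ℝ) 1, -(deriv (deriv ut) x) = lt * pt x * ut x)
    (M : ℝ) (hM : IsLeast ((fun x => pt x / p x) '' Set.Icc (0:ℝ) 1) M)
    (hl : l = lt * M) :
    l ≠ 0 ∧ ∀ x ∈ Set.Icc (0:ℝ) 1, p x = (lt / l) * pt x := by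
  -- M is positive
  obtain ⟨x₀, hx₀, hMx₀⟩ := hM.1
  have hMpos : 0 < M := by
    rw [← hMx₀]
    exact div_pos (hptpos x₀ hx₀) (hppos x₀ hx₀)
  have hlne : l ≠ 0 := by rw [hl]; exact mul_ne_zero hlt hMpos.ne'
  refine ⟨hlne, ?_⟩
  -- smoothness facts
  have hu2 : ContDiff ℝ (1 + 1) u := by norm_num; exact hu
  have hut2 : ContDiff ℝ (1 + 1) ut := by norm_num; exact hut
  obtain ⟨hud, -, hud'⟩ := contDiff_succ_iff_deriv.mp hu2
  obtain ⟨hutd, -, hutd'⟩ := contDiff_succ_iff_deriv.mp hut2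
  have hud'd : Differentiable ℝ (deriv u) := hud'.differentiable one_ne_zero
  have hutd'd : Differentiable ℝ (deriv ut) := hutd'.differentiable one_ne_zero
  -- the Wronskian
  set W : ℝ → ℝ := fun x => deriv u x * ut x - u x * deriv ut x with hWdef
  have hWderiv : ∀ x, HasDerivAt W
      (deriv (deriv u) x * ut x - u x * deriv (deriv ut) x) x := by
    intro x
    have h1 : HasDerivAt (deriv u) (deriv (deriv u) x) x := (hud'd x).hasDerivAt
    have h2 : HasDerivAt ut (deriv ut x) x := (hutd x).hasDerivAt
    have h3 : HasDerivAt u (deriv u x) x := (hud x).hasDerivAt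
    have h4 : HasDerivAt (deriv ut) (deriv (deriv ut) x) x := (hutd'd x).hasDerivAt
    have := (h1.mul h2).sub (h3.mul h4)
    refine this.congr_deriv ?_
    ring
  have hWdiff : Differentiable ℝ W := fun x => (hWderiv x).differentiableAt
  have hWcont : Continuous W := hWdiff.continuous
  have hWd_eq : ∀ x ∈ Set.Icc (0:ℝ) 1,
      deriv W x = lt * ((pt x - M * p x) * (u x * ut x)) := by
    intro x hx
    rw [(hWderiv x).deriv]
    have h1 := hode x hx
    have h2 := htode x hx
    have e1 : deriv (deriv u) x = -(l * p x * u x) := by linarith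
    have e2 : deriv (deriv ut) x = -(lt * pt x * ut x) := by linarith
    rw [e1, e2, hl]; ring
  -- W vanishes at the endpoints
  have hW0 : W 0 = 0 := by
    have := det_aux (u 0) (deriv u 0) (ut 0) (deriv ut 0) (Real.cos α) (Real.sin α)
      (by rw [add_comm]; exact Real.sin_sq_add_cos_sq α) hbc.1 htbc.1
    simp only [hWdef]; linarith
  have hW1 : W 1 = 0 := by
    have := det_aux (u 1) (deriv u 1) (ut 1) (deriv ut 1) (Real.cos β) (Real.sin β)
      (by rw [add_comm]; exact Real.sin_sq_add_cos_sq β) hbc.2 htbc.2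
    simp only [hWdef]; linarith
  -- sign of the integrand
  have hfac : ∀ x ∈ Set.Ioo (0:ℝ) 1, 0 ≤ (pt x - M * p x) * (u x * ut x) := by
    intro x hx
    have hx' : x ∈ Set.Icc (0:ℝ) 1 := Set.Ioo_subset_Icc_self hx
    have hge : M ≤ pt x / p x := hM.2 ⟨x, hx', rfl⟩
    have hpx := hppos x hx'
    have : M * p x ≤ pt x := by
      rw [le_div_iff₀ hpx] at hge; linarith
    have hu' := hupos x hx
    have hut' := hutpos x hx
    exact mul_nonneg (by linarith) (mul_pos hu' hut').le
  -- W vanishes identically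
  have hWzero : ∀ x ∈ Set.Icc (0:ℝ) 1, W x = 0 := by
    set ε : ℝ := if 0 < lt then 1 else -1 with hε
    have hεlt : 0 < ε * lt := by
      rcases hlt.lt_or_gt with h | h
      · rw [hε, if_neg (not_lt.mpr h.le)]; linarith
      · rw [hε, if_pos h]; linarith
    have hεne : ε ≠ 0 := left_ne_zero_of_mul hεlt.ne'
    have hV : ∀ x ∈ Set.Icc (0:ℝ) 1, (fun x => ε * W x) x = 0 := by
      apply zero_of_mono (fun x => ε * W x) (continuous_const.mul hWcont) (hWdiff.const_mul ε)
      · intro x hx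
        rw [deriv_const_mul _ (hWdiff x), hWd_eq x (Set.Ioo_subset_Icc_self hx)]
        have := hfac x hx
        calc (0:ℝ) = (ε * lt) * 0 := by ring
          _ ≤ (ε * lt) * ((pt x - M * p x) * (u x * ut x)) :=
            mul_le_mul_of_nonneg_left this hεlt.le
          _ = ε * (lt * ((pt x - M * p x) * (u x * ut x))) := by ring
      · simp [hW0]
      · simp [hW1]
    intro x hx
    have := hV x hx
    exact (mul_eq_zero.mp this).resolve_left hεne
  -- derivative of W vanishes on the open interval
  have hderiv0 : ∀ x ∈ Set.Ioo (0:ℝ) 1, deriv W x = 0 := by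
    intro x hx
    have hev : W =ᶠ[nhds x] (fun _ => (0:ℝ)) :=
      Filter.eventuallyEq_of_mem (isOpen_Ioo.mem_nhds hx)
        (fun y hy => hWzero y (Set.Ioo_subset_Icc_self hy))
    rw [hev.deriv_eq, deriv_const]
  -- hence pt = M * p on (0,1)
  have hIoo : Set.EqOn pt (fun x => M * p x) (Set.Ioo (0:ℝ) 1) := by
    intro x hx
    have h1 := hWd_eq x (Set.Ioo_subset_Icc_self hx)
    rw [hderiv0 x hx] at h1
    have hu' := hupos x hx
    have hut' := hutpos x hx
    have hpos : 0 < u x * ut x := mul_pos hu' hut'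
    have : (pt x - M * p x) * (u x * ut x) = 0 := by
      rcases mul_eq_zero.mp h1.symm with h | h
      · exact absurd h hlt
      · exact h
    have := (mul_eq_zero.mp this).resolve_right hpos.ne'
    simp only []; linarith
  -- extend by continuity to [0,1]
  have hIcc : Set.EqOn pt (fun x => M * p x) (Set.Icc (0:ℝ) 1) := by
    have := hIoo.closure hpt (continuous_const.mul hp)
    rwa [closure_Ioo (by norm_num : (0:ℝ) ≠ 1)] at this
  -- conclude
  intro x hx
  have hptx : pt x = M * p x := hIcc hx
  rw [hl, hptx]
  field_simp
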